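/- Let $Z$ be a topological space covered by a family of open sets closed under the following two operations: (i) if the property P holds on open sets $U$, $V$, and on $U \cap V$, then P holds on $U \cup V$; (ii) if P holds on each member of a disjoint family $\{U_\alpha\}$ of open sets, then P holds on $\bigcup_\alpha U_\alpha$. If $Z$ is a smooth manifold and P holds on every open set diffeomorphic to a convex open subset of $\mathbb{R}^{\dim Z}$, then P holds on $Z$. -/

import Mathlib

open scoped Manifold

open Set

variable {X : Type} [TopologicalSpace X]

lemma mv_finset {W : Set X} {Q Good : Set X → Prop}
    (hGopen : ∀ G, Good G → IsOpen G)
    (hGsub : ∀ G, Good G → G ⊆ W)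
    (hGinter : ∀ G G', Good G → Good G' → Good (G ∩ G'))
    (hGQ : ∀ G, Good G → Q G)
    (hQempty : Q ∅)
    (hU : ∀ U V, IsOpen U → IsOpen V → U ⊆ W → V ⊆ W → Q U → Q V → Q (U ∩ V) → Q (U ∪ V)) :
    ∀ S : Finset (Set X), (∀ G ∈ S, Good G) →
      (∀ G, Good G → Q (G ∩ ⋃₀ ↑S)) ∧ Q (⋃₀ (↑S : Set (Set X))) := by
  classical
  intro S
  induction S using Finset.induction_on with
  | empty => intro _; simpa using ⟨fun G _ => hQempty, hQempty⟩
  | @insert G' S' hG' ih =>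
    intro hgood
    have hG'good : Good G' := hgood G' (Finset.mem_insert_self _ _)
    have hS'good : ∀ G ∈ S', Good G := fun G hG => hgood G (Finset.mem_insert_of_mem hG)
    obtain ⟨ih1, ih2⟩ := ih hS'good
    have hopenS' : IsOpen (⋃₀ (↑S' : Set (Set X))) :=
      isOpen_sUnion fun G hG => hGopen G (hS'good G hG)
    have hsubS' : ⋃₀ (↑S' : Set (Set X)) ⊆ W := sUnion_subset fun G hG => hGsub G (hS'good G hG)
    have key : ∀ G, Good G → Q (G ∩ (G' ∪ ⋃₀ ↑S')) := by
      intro G hG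
      have h1 : Q (G ∩ G') := hGQ _ (hGinter _ _ hG hG'good)
      have h2 : Q (G ∩ ⋃₀ ↑S') := ih1 G hG
      have h3 : Q ((G ∩ G') ∩ (G ∩ ⋃₀ ↑S')) := by
        have : (G ∩ G') ∩ (G ∩ ⋃₀ ↑S') = (G ∩ G') ∩ ⋃₀ ↑S' := by
          ext x; simp; tauto
        rw [this]
        exact ih1 _ (hGinter _ _ hG hG'good)
      have := hU (G ∩ G') (G ∩ ⋃₀ ↑S')
        ((hGopen G hG).inter (hGopen G' hG'good)) ((hGopen G hG).inter hopenS')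
        (inter_subset_left.trans (hGsub G hG)) (inter_subset_left.trans (hGsub G hG))
        h1 h2 h3
      rwa [← inter_union_distrib_left] at this
    constructor
    · intro G hG
      simpa [Finset.coe_insert, sUnion_insert] using key G hG
    · rw [Finset.coe_insert, sUnion_insert]
      exact hU G' (⋃₀ ↑S') (hGopen _ hG'good) hopenS' (hGsub _ hG'good) hsubS'
        (hGQ _ hG'good) ih2 (ih1 G' hG'good)
variable {X : Type} [TopologicalSpace X]

lemma mv_finset_inter {W : Set X} {Q Good : Set X → Prop}
    (hGopen : ∀ G, Good G → IsOpen G)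
    (hGsub : ∀ G, Good G → G ⊆ W)
    (hGinter : ∀ G G', Good G → Good G' → Good (G ∩ G'))
    (hGQ : ∀ G, Good G → Q G)
    (hQempty : Q ∅)
    (hU : ∀ U V, IsOpen U → IsOpen V → U ⊆ W → V ⊆ W → Q U → Q V → Q (U ∩ V) → Q (U ∪ V))
    (S T : Finset (Set X)) (hS : ∀ G ∈ S, Good G) (hT : ∀ G ∈ T, Good G) :
    Q (⋃₀ (↑S : Set (Set X)) ∩ ⋃₀ (↑T : Set (Set X))) := by
  classical
  have hrep : ⋃₀ (↑S : Set (Set X)) ∩ ⋃₀ ↑T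
      = ⋃₀ (↑(Finset.image₂ (· ∩ ·) S T) : Set (Set X)) := by
    ext x
    simp only [Finset.coe_image₂, mem_inter_iff, mem_sUnion, Set.mem_image2]
    constructor
    · rintro ⟨⟨G, hG, hxG⟩, ⟨H, hH, hxH⟩⟩
      exact ⟨G ∩ H, ⟨G, hG, H, hH, rfl⟩, hxG, hxH⟩
    · rintro ⟨-, ⟨G, hG, H, hH, rfl⟩, hxG, hxH⟩
      exact ⟨⟨G, hG, hxG⟩, ⟨H, hH, hxH⟩⟩
  rw [hrep]
  refine (mv_finset hGopen hGsub hGinter hGQ hQempty hU _ ?_).2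
  intro G hG
  rw [Finset.mem_image₂] at hG
  obtain ⟨a, ha, b, hb, rfl⟩ := hG
  exact hGinter _ _ (hS a ha) (hT b hb)
variable {X : Type} [TopologicalSpace X]

lemma mv_abstract [T2Space X] {W : Set X} {Q Good : Set X → Prop}
    (hGopen : ∀ G, Good G → IsOpen G)
    (hGsub : ∀ G, Good G → G ⊆ W)
    (hGinter : ∀ G G', Good G → Good G' → Good (G ∩ G'))
    (hGQ : ∀ G, Good G → Q G)
    (hbasis : ∀ x ∈ W, ∀ O : Set X, IsOpen O → x ∈ O → ∃ G, Good G ∧ x ∈ G ∧ G ⊆ O)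
    (hU : ∀ U V, IsOpen U → IsOpen V → U ⊆ W → V ⊆ W → Q U → Q V → Q (U ∩ V) → Q (U ∪ V))
    (hD : ∀ U : ℕ → Set X, (∀ i, IsOpen (U i)) → (∀ i, U i ⊆ W) →
      Pairwise (Function.onFun Disjoint U) → (∀ i, Q (U i)) → Q (⋃ i, U i))
    (hQempty : Q ∅)
    (K : ℕ → Set X) (hKc : ∀ m, IsCompact (K m))
    (hKi : ∀ m, K m ⊆ interior (K (m + 1)))
    (hKU : ⋃ m, K m = W) : Q W := by
  classical
  -- prepend ∅ to the exhaustion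
  set K' : ℕ → Set X := fun m => match m with | 0 => ∅ | (m + 1) => K m with hK'
  have hK'c : ∀ m, IsCompact (K' m) := by
    intro m; cases m with
    | zero => exact isCompact_empty
    | succ m => exact hKc m
  have hK'i : ∀ m, K' m ⊆ interior (K' (m + 1)) := by
    intro m; cases m with
    | zero => exact empty_subset _
    | succ m => exact hKi m
  have hK'succ : ∀ m, K' m ⊆ K' (m + 1) := fun m => (hK'i m).trans interior_subset
  have hK'mono : Monotone K' := monotone_nat_of_le_succ hK'succ
  have hK'W : ∀ m, K' m ⊆ W := by
    intro m
    cases m with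
    | zero => exact empty_subset _
    | succ m => rw [← hKU]; exact subset_iUnion K m
  -- bands and their open neighborhoods
  set B : ℕ → Set X := fun m => K' (m + 1) \ interior (K' m) with hB
  set O : ℕ → Set X := fun m => interior (K' (m + 2)) \ K' (m - 1) with hO
  have hBc : ∀ m, IsCompact (B m) := fun m => (hK'c (m + 1)).diff isOpen_interior
  have hOopen : ∀ m, IsOpen (O m) := fun m => isOpen_interior.sdiff (hK'c (m - 1)).isClosed
  have hBO : ∀ m, B m ⊆ O m := by
    intro m x hx
    refine ⟨hK'i (m + 1) hx.1, fun hx' => hx.2 ?_⟩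
    have hsub : K' (m - 1) ⊆ interior (K' m) := by
      cases m with
      | zero => exact fun y hy => absurd hy (by simp [hK'])
      | succ m => exact hK'i m
    exact hsub hx'
  have hBW : ∀ m, B m ⊆ W := fun m => (diff_subset).trans (hK'W (m + 1))
  have hOW : ∀ m, O m ⊆ W := fun m => diff_subset.trans (interior_subset.trans (hK'W (m + 2)))
  -- cover each band by finitely many good sets inside O m
  have hA : ∀ m, ∃ S : Finset (Set X), (∀ G ∈ S, Good G) ∧ B m ⊆ ⋃₀ ↑S ∧ ⋃₀ ↑S ⊆ O m := by
    intro m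
    have hx : ∀ x ∈ B m, ∃ G, Good G ∧ x ∈ G ∧ G ⊆ O m := fun x hx =>
      hbasis x (hBW m hx) (O m) (hOopen m) (hBO m hx)
    choose! g hg1 hg2 hg3 using hx
    obtain ⟨t, htB, htcov⟩ := (hBc m).elim_nhds_subcover g
      (fun x hx => (hGopen _ (hg1 x hx)).mem_nhds (hg2 x hx))
    refine ⟨t.image g, ?_, ?_, ?_⟩
    · intro G hG
      rw [Finset.mem_image] at hG
      obtain ⟨x, hx, rfl⟩ := hG
      exact hg1 x (htB x hx)
    · intro x hx
      obtain ⟨y, hy, hxy⟩ := by simpa using htcov hx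
      exact ⟨g y, by simp [Finset.mem_image]; exact ⟨y, hy, rfl⟩, hxy⟩
    · intro x hx
      obtain ⟨G, hG, hxG⟩ := hx
      rw [Finset.coe_image] at hG
      obtain ⟨y, hy, rfl⟩ := hG
      exact hg3 y (htB y hy) hxG
  choose S hSgood hBA hAO using hA
  set A : ℕ → Set X := fun m => ⋃₀ ↑(S m) with hAdef
  have hAopen : ∀ m, IsOpen (A m) := fun m => isOpen_sUnion fun G hG => hGopen G (hSgood m G hG)
  have hAW : ∀ m, A m ⊆ W := fun m => (hAO m).trans (hOW m)
  have hQA : ∀ m, Q (A m) := fun m => (mv_finset hGopen hGsub hGinter hGQ hQempty hU _ (hSgood m)).2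
  -- the gap-3 disjointness
  have hgap : ∀ i j, i + 3 ≤ j → Disjoint (A i) (A j) := by
    intro i j hij
    rw [Set.disjoint_left]
    intro x hxi hxj
    have h1 : x ∈ K' (i + 2) := interior_subset ((hAO i hxi).1)
    have h2 : x ∉ K' (j - 1) := (hAO j hxj).2
    exact h2 (hK'mono (show i + 2 ≤ j - 1 by omega) h1)
  have hgap' : ∀ i j, A i ∩ A j ≠ ∅ → (i ≤ j + 2 ∧ j ≤ i + 2) := by
    intro i j h
    by_contra hc
    rcases (by omega : i + 3 ≤ j ∨ j + 3 ≤ i) with h' | h'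
    · exact h (Set.disjoint_iff_inter_eq_empty.1 (hgap i j h'))
    · exact h (Set.disjoint_iff_inter_eq_empty.1 ((hgap j i h').symm))
  -- the union of all A's is W
  have hcover : ⋃ m, A m = W := by
    apply subset_antisymm (iUnion_subset hAW)
    intro x hxW
    have hex : ∃ m, x ∈ K' m := by
      rw [← hKU] at hxW
      obtain ⟨m, hm⟩ := mem_iUnion.1 hxW
      exact ⟨m + 1, hm⟩
    have hex : ∃ m, x ∈ K' (m + 1) := by
      rw [← hKU] at hxW
      obtain ⟨m, hm⟩ := mem_iUnion.1 hxW
      exact ⟨m, hm⟩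
    set m := Nat.find hex with hmdef
    have hx1 : x ∈ K' (m + 1) := Nat.find_spec hex
    have hx2 : x ∉ interior (K' m) := by
      intro hx'
      have hx'' : x ∈ K' m := interior_subset hx'
      have hmpos : m ≠ 0 := by
        intro h0
        rw [h0] at hx''
        exact absurd hx'' (notMem_empty x)
      have hmin := Nat.find_min hex (m := m - 1) (by omega)
      apply hmin
      have heq : m - 1 + 1 = m := by omega
      rw [heq]
      exact hx''
    exact mem_iUnion.2 ⟨m, hBA m ⟨hx1, hx2⟩⟩
  -- the three staggered unions
  have hQAinter : ∀ i (T : Finset (Set X)), (∀ G ∈ T, Good G) → Q (A i ∩ ⋃₀ ↑T) :=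
    fun i T hT => mv_finset_inter hGopen hGsub hGinter hGQ hQempty hU (S i) T (hSgood i) hT
  have hgoodU : ∀ T T' : Finset (Set X), (∀ G ∈ T, Good G) → (∀ G ∈ T', Good G) →
      ∀ G ∈ T ∪ T', Good G := by
    intro T T' h1 h2 G hG
    rcases Finset.mem_union.1 hG with h | h
    exacts [h1 G h, h2 G h]
  have hexpand3 : ∀ i j l : ℕ, Q (A i ∩ (A j ∪ A l)) := by
    intro i j l
    have h := hQAinter i (S j ∪ S l) (hgoodU _ _ (hSgood j) (hSgood l))
    simp only [Finset.coe_union, sUnion_union] at h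
    simp only [hAdef]
    exact h
  have hexpand5 : ∀ i j l p q : ℕ, Q (A i ∩ ((A j ∪ A l) ∪ (A p ∪ A q))) := by
    intro i j l p q
    have h := hQAinter i ((S j ∪ S l) ∪ (S p ∪ S q))
      (hgoodU _ _ (hgoodU _ _ (hSgood j) (hSgood l)) (hgoodU _ _ (hSgood p) (hSgood q)))
    simp only [Finset.coe_union, sUnion_union] at h
    simp only [hAdef]
    exact h
  set U : ℕ → Set X := fun r => ⋃ k, A (3 * k + r) with hUdef
  have hUopen : ∀ r, IsOpen (U r) := fun r => isOpen_iUnion fun k => hAopen _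
  have hUsub : ∀ r, U r ⊆ W := fun r => iUnion_subset fun k => hAW _
  have hQU : ∀ r, Q (U r) := by
    intro r
    apply hD _ (fun k => hAopen _) (fun k => hAW _)
    · intro k l hkl
      simp only [Function.onFun]
      rcases lt_or_gt_of_ne hkl with h | h
      · exact hgap _ _ (by omega)
      · exact (hgap _ _ (by omega)).symm
    · exact fun k => hQA _
  -- Q (U 0 ∩ U 1)
  have key1 : U 0 ∩ U 1 = ⋃ k, A (3 * k) ∩ (A (3 * k + 1) ∪ A (3 * (k - 1) + 1)) := by
    apply subset_antisymm
    · rintro x ⟨hx0, hx1⟩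
      simp only [hUdef, mem_iUnion] at hx0 hx1
      obtain ⟨k, hk⟩ := hx0
      obtain ⟨l, hl⟩ := hx1
      have hb := hgap' (3 * k + 0) (3 * l + 1) (Set.nonempty_iff_ne_empty.1 ⟨x, hk, hl⟩)
      rw [mem_iUnion]
      refine ⟨k, ?_, ?_⟩
      · simpa using hk
      · rcases (by omega : l = k ∨ l + 1 = k) with h | h
        · subst h; exact Or.inl hl
        · right
          have hkl : k - 1 = l := by omega
          rw [hkl]
          exact hl
    · apply iUnion_subset
      intro k x hx
      constructor
      · exact mem_iUnion.2 ⟨k, by simpa using hx.1⟩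
      · rcases hx.2 with h | h
        · exact mem_iUnion.2 ⟨k, h⟩
        · exact mem_iUnion.2 ⟨k - 1, h⟩
  have hQ01i : Q (U 0 ∩ U 1) := by
    rw [key1]
    apply hD
    · exact fun k => (hAopen _).inter ((hAopen _).union (hAopen _))
    · exact fun k => inter_subset_left.trans (hAW _)
    · intro k l hkl
      simp only [Function.onFun]
      refine Disjoint.mono inter_subset_left inter_subset_left ?_
      rcases lt_or_gt_of_ne hkl with h | h
      · exact hgap _ _ (by omega)
      · exact (hgap _ _ (by omega)).symm
    · exact fun k => hexpand3 _ _ _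
  have hQ01 : Q (U 0 ∪ U 1) :=
    hU _ _ (hUopen 0) (hUopen 1) (hUsub 0) (hUsub 1) (hQU 0) (hQU 1) hQ01i
  -- Q ((U 0 ∪ U 1) ∩ U 2)
  have key2 : (U 0 ∪ U 1) ∩ U 2 =
      ⋃ k, A (3 * k + 2) ∩ ((A (3 * k) ∪ A (3 * (k + 1))) ∪ (A (3 * k + 1) ∪ A (3 * (k + 1) + 1))) := by
    apply subset_antisymm
    · rintro x ⟨hx01, hx2⟩
      simp only [hUdef, mem_iUnion] at hx01 hx2 ⊢
      obtain ⟨k, hk⟩ := hx2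
      refine ⟨k, hk, ?_⟩
      rcases hx01 with hx0 | hx0
      · obtain ⟨l, hl⟩ := mem_iUnion.1 hx0
        have hb := hgap' (3 * l + 0) (3 * k + 2) (Set.nonempty_iff_ne_empty.1 ⟨x, hl, hk⟩)
        left
        rcases (by omega : l = k ∨ l = k + 1) with h | h
        · subst h; exact Or.inl (by simpa using hl)
        · subst h; exact Or.inr (by simpa using hl)
      · obtain ⟨l, hl⟩ := mem_iUnion.1 hx0
        have hb := hgap' (3 * l + 1) (3 * k + 2) (Set.nonempty_iff_ne_empty.1 ⟨x, hl, hk⟩)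
        right
        rcases (by omega : l = k ∨ l = k + 1) with h | h
        · subst h; exact Or.inl hl
        · subst h; exact Or.inr hl
    · apply iUnion_subset
      intro k x hx
      refine ⟨?_, mem_iUnion.2 ⟨k, hx.1⟩⟩
      rcases hx.2 with (h | h) | (h | h)
      · exact Or.inl (mem_iUnion.2 ⟨k, by simpa using h⟩)
      · exact Or.inl (mem_iUnion.2 ⟨k + 1, by simpa using h⟩)
      · exact Or.inr (mem_iUnion.2 ⟨k, h⟩)
      · exact Or.inr (mem_iUnion.2 ⟨k + 1, h⟩)
  have hQ012i : Q ((U 0 ∪ U 1) ∩ U 2) := by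
    rw [key2]
    apply hD
    · exact fun k => (hAopen _).inter (((hAopen _).union (hAopen _)).union ((hAopen _).union (hAopen _)))
    · exact fun k => inter_subset_left.trans (hAW _)
    · intro k l hkl
      simp only [Function.onFun]
      refine Disjoint.mono inter_subset_left inter_subset_left ?_
      rcases lt_or_gt_of_ne hkl with h | h
      · exact hgap _ _ (by omega)
      · exact (hgap _ _ (by omega)).symm
    · exact fun k => hexpand5 _ _ _ _ _
  have hfinal : (U 0 ∪ U 1) ∪ U 2 = W := by
    rw [← hcover]
    apply subset_antisymm
    · rintro x ((hx | hx) | hx) <;>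
      · obtain ⟨k, hk⟩ := mem_iUnion.1 hx
        exact mem_iUnion.2 ⟨_, hk⟩
    · intro x hx
      obtain ⟨m, hm⟩ := mem_iUnion.1 hx
      obtain ⟨k, r, hr3, rfl⟩ : ∃ k r, r < 3 ∧ m = 3 * k + r :=
        ⟨m / 3, m % 3, by omega, by omega⟩
      interval_cases r
      · exact Or.inl (Or.inl (mem_iUnion.2 ⟨k, hm⟩))
      · exact Or.inl (Or.inr (mem_iUnion.2 ⟨k, hm⟩))
      · exact Or.inr (mem_iUnion.2 ⟨k, hm⟩)
  rw [← hfinal]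
  exact hU _ _ ((hUopen 0).union (hUopen 1)) (hUopen 2)
    (union_subset (hUsub 0) (hUsub 1)) (hUsub 2) hQ01 (hQU 2) hQ012i

lemma mv_chart {n : ℕ} {Z : Type} [TopologicalSpace Z]
    [ChartedSpace (EuclideanSpace ℝ (Fin n)) Z]
    [IsManifold (𝓡 n) ((⊤ : ℕ∞) : WithTop ℕ∞) Z] [T2Space Z]
    (P : Set Z → Prop)
    (hUnion : ∀ U V : Set Z, IsOpen U → IsOpen V →
      P U → P V → P (U ∩ V) → P (U ∪ V))
    (hDisjoint : ∀ (ι : Type) (U : ι → Set Z), (∀ i, IsOpen (U i)) →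
      Pairwise (Function.onFun Disjoint U) → (∀ i, P (U i)) → P (⋃ i, U i))
    (hConvex : ∀ U : Set Z, IsOpen U →
      (∃ e : PartialHomeomorph Z (EuclideanSpace ℝ (Fin n)),
        e.source = U ∧ Convex ℝ e.target ∧
        ContMDiffOn (𝓡 n) (𝓡 n) (⊤ : ℕ∞) e e.source ∧
        ContMDiffOn (𝓡 n) (𝓡 n) (⊤ : ℕ∞) e.symm e.target) → P U)
    (e : OpenPartialHomeomorph Z (EuclideanSpace ℝ (Fin n)))
    (he : ContMDiffOn (𝓡 n) (𝓡 n) (⊤ : ℕ∞) e e.source)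
    (he' : ContMDiffOn (𝓡 n) (𝓡 n) (⊤ : ℕ∞) e.symm e.target) :
    P e.source := by
  classical
  have hPempty : P ∅ := by
    have h := hDisjoint Empty (fun i => i.elim) (fun i => i.elim)
      (fun i => i.elim) (fun i => i.elim)
    simpa using h
  set Q : Set (EuclideanSpace ℝ (Fin n)) → Prop := fun S => P (e.symm '' S) with hQdef
  set Good : Set (EuclideanSpace ℝ (Fin n)) → Prop := fun S => IsOpen S ∧ S ⊆ e.target ∧ Convex ℝ S with hGooddef
  have himgopen : ∀ S : Set (EuclideanSpace ℝ (Fin n)), IsOpen S → S ⊆ e.target → IsOpen (e.symm '' S) := by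
    intro S hS hSsub
    exact e.symm.isOpen_image_of_subset_source hS (by rwa [e.symm_source])
  have himginter : ∀ S T : Set (EuclideanSpace ℝ (Fin n)), S ⊆ e.target → T ⊆ e.target →
      e.symm '' (S ∩ T) = e.symm '' S ∩ e.symm '' T := by
    intro S T hS hT
    exact Set.InjOn.image_inter e.symm.injOn hS hT
  -- goodness implies Q
  have hGQ : ∀ G, Good G → Q G := by
    rintro G ⟨hGopen, hGsub, hGconv⟩
    refine hConvex _ (himgopen G hGopen hGsub) ?_
    refine ⟨(e.symm.restr G).symm.toPartialHomeomorph, ?_, ?_, ?_, ?_⟩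
    · show (e.symm.restr G).target = _
      rw [OpenPartialHomeomorph.restr_target, hGopen.interior_eq]
      rw [e.symm_image_eq_source_inter_preimage hGsub, e.symm_target, e.symm_symm]
    · show Convex ℝ (e.symm.restr G).source
      rw [OpenPartialHomeomorph.restr_source, hGopen.interior_eq, e.symm_source,
        inter_eq_self_of_subset_right hGsub]
      exact hGconv
    · show ContMDiffOn (𝓡 n) (𝓡 n) (⊤ : ℕ∞) (⇑e) (e.symm.restr G).target
      apply he.mono
      rw [OpenPartialHomeomorph.restr_target]
      exact inter_subset_left.trans (by rw [e.symm_target])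
    · show ContMDiffOn (𝓡 n) (𝓡 n) (⊤ : ℕ∞) (⇑e.symm) (e.symm.restr G).source
      apply he'.mono
      rw [OpenPartialHomeomorph.restr_source, e.symm_source]
      exact inter_subset_left
  have hGinter : ∀ G G', Good G → Good G' → Good (G ∩ G') := by
    rintro G G' ⟨h1, h2, h3⟩ ⟨h1', h2', h3'⟩
    exact ⟨h1.inter h1', inter_subset_left.trans h2, h3.inter h3'⟩
  have hbasis : ∀ x ∈ e.target, ∀ O : Set (EuclideanSpace ℝ (Fin n)), IsOpen O → x ∈ O →
      ∃ G, Good G ∧ x ∈ G ∧ G ⊆ O := by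
    intro x hx O hO hxO
    obtain ⟨ε, hε, hball⟩ := Metric.isOpen_iff.1 (hO.inter e.open_target) x ⟨hxO, hx⟩
    exact ⟨Metric.ball x ε,
      ⟨Metric.isOpen_ball, hball.trans inter_subset_right, convex_ball x ε⟩,
      Metric.mem_ball_self hε, hball.trans inter_subset_left⟩
  have hUQ : ∀ U V : Set (EuclideanSpace ℝ (Fin n)), IsOpen U → IsOpen V → U ⊆ e.target → V ⊆ e.target →
      Q U → Q V → Q (U ∩ V) → Q (U ∪ V) := by
    intro U V hUo hVo hUs hVs hQU hQV hQUV
    show P (e.symm '' (U ∪ V))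
    rw [image_union]
    apply hUnion _ _ (himgopen _ hUo hUs) (himgopen _ hVo hVs) hQU hQV
    rw [← himginter U V hUs hVs]
    exact hQUV
  have hDQ : ∀ U : ℕ → Set (EuclideanSpace ℝ (Fin n)), (∀ i, IsOpen (U i)) → (∀ i, U i ⊆ e.target) →
      Pairwise (Function.onFun Disjoint U) → (∀ i, Q (U i)) → Q (⋃ i, U i) := by
    intro U hUo hUs hdisj hQU
    show P (e.symm '' ⋃ i, U i)
    rw [image_iUnion]
    apply hDisjoint ℕ _ (fun i => himgopen _ (hUo i) (hUs i)) _ hQU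
    intro i j hij
    simp only [Function.onFun]
    rw [Set.disjoint_left]
    rintro y ⟨a, ha, rfl⟩ ⟨b, hb, hba⟩
    have hab : a = b := e.symm.injOn (hUs i ha) (hUs j hb) hba.symm
    subst hab
    exact Set.disjoint_left.1 (hdisj hij) ha hb
  have hQempty : Q ∅ := by
    show P (e.symm '' ∅)
    rw [image_empty]
    exact hPempty
  -- compact exhaustion of e.target
  have htopen : IsOpen e.target := e.open_target
  haveI : LocallyCompactSpace ↥e.target := htopen.locallyCompactSpace
  haveI : SigmaCompactSpace ↥e.target := inferInstance
  set CE := CompactExhaustion.choice ↥e.target with hCE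
  set K : ℕ → Set (EuclideanSpace ℝ (Fin n)) := fun m => Subtype.val '' CE m with hK
  have hKc : ∀ m, IsCompact (K m) := fun m => (CE.isCompact m).image continuous_subtype_val
  have hKi : ∀ m, K m ⊆ interior (K (m + 1)) := by
    intro m
    have h1 : K m ⊆ Subtype.val '' interior (CE (m + 1)) :=
      image_mono (CE.subset_interior_succ m)
    have h2 : IsOpen (Subtype.val '' interior (CE (m + 1))) :=
      htopen.isOpenEmbedding_subtypeVal.isOpenMap _ isOpen_interior
    exact h1.trans (interior_maximal (image_mono interior_subset) h2)
  have hKU : ⋃ m, K m = e.target := by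
    rw [hK, ← image_iUnion, CE.iUnion_eq, image_univ, Subtype.range_val]
  have main := mv_abstract (fun G hG => hG.1) (fun G hG => hG.2.1) hGinter hGQ hbasis
    hUQ hDQ hQempty K hKc hKi hKU
  rwa [hQdef, e.symm_image_target_eq_source] at main

/-- Mayer–Vietoris induction principle.  Let `Z` be a smooth
`n`-manifold and `P` a property of open subsets of `Z` such that:
(i) if `P` holds on open sets `U`, `V` and on `U ∩ V`, then it holds on `U ∪ V`;
(ii) if `P` holds on each member of a pairwise disjoint family of open sets, then
it holds on their union.
If `P` holds on every open set diffeomorphic to a convex open subset of `ℝⁿ`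
(realized as `EuclideanSpace ℝ (Fin n)`), then `P` holds on `Z`. -/
theorem mayer_vietoris_induction
    {n : ℕ} {Z : Type} [TopologicalSpace Z]
    [ChartedSpace (EuclideanSpace ℝ (Fin n)) Z]
    [IsManifold (𝓡 n) ((⊤ : ℕ∞) : WithTop ℕ∞) Z]
    [T2Space Z] [SigmaCompactSpace Z]
    (P : Set Z → Prop)
    (hUnion : ∀ U V : Set Z, IsOpen U → IsOpen V →
      P U → P V → P (U ∩ V) → P (U ∪ V))
    (hDisjoint : ∀ (ι : Type) (U : ι → Set Z), (∀ i, IsOpen (U i)) →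
      Pairwise (Function.onFun Disjoint U) → (∀ i, P (U i)) → P (⋃ i, U i))
    (hConvex : ∀ U : Set Z, IsOpen U →
      (∃ e : PartialHomeomorph Z (EuclideanSpace ℝ (Fin n)),
        e.source = U ∧ Convex ℝ e.target ∧
        ContMDiffOn (𝓡 n) (𝓡 n) (⊤ : ℕ∞) e e.source ∧
        ContMDiffOn (𝓡 n) (𝓡 n) (⊤ : ℕ∞) e.symm e.target) → P U) :
    P Set.univ := by
  classical
  haveI : LocallyCompactSpace Z :=
    ChartedSpace.locallyCompactSpace (EuclideanSpace ℝ (Fin n)) Z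
  have hPempty : P ∅ := by
    have h := hDisjoint Empty (fun i => i.elim) (fun i => i.elim)
      (fun i => i.elim) (fun i => i.elim)
    simpa using h
  set Good : Set Z → Prop := fun G => IsOpen G ∧
    ∃ x : Z, G ⊆ (chartAt (EuclideanSpace ℝ (Fin n)) x).source with hGooddef
  have hGQ : ∀ G, Good G → P G := by
    rintro G ⟨hGo, x, hGsub⟩
    set c := chartAt (EuclideanSpace ℝ (Fin n)) x with hc
    have hsrc : (c.restr G).source = G := by
      rw [c.restr_source' G hGo, inter_eq_self_of_subset_right hGsub]
    have h1 : ContMDiffOn (𝓡 n) (𝓡 n) (⊤ : ℕ∞) (c.restr G) (c.restr G).source := by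
      show ContMDiffOn (𝓡 n) (𝓡 n) (⊤ : ℕ∞) (⇑c) _
      exact (contMDiffOn_chart (I := 𝓡 n)).mono (by rw [hsrc]; exact hGsub)
    have h2 : ContMDiffOn (𝓡 n) (𝓡 n) (⊤ : ℕ∞) (c.restr G).symm (c.restr G).target := by
      show ContMDiffOn (𝓡 n) (𝓡 n) (⊤ : ℕ∞) (⇑c.symm) _
      apply (contMDiffOn_chart_symm (I := 𝓡 n)).mono
      rw [OpenPartialHomeomorph.restr_target]
      exact inter_subset_left
    have h := mv_chart P hUnion hDisjoint hConvex (c.restr G) h1 h2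
    rwa [hsrc] at h
  have hGinter : ∀ G G', Good G → Good G' → Good (G ∩ G') := by
    rintro G G' ⟨h1, x, h2⟩ ⟨h1', x', h2'⟩
    exact ⟨h1.inter h1', x, inter_subset_left.trans h2⟩
  have hbasis : ∀ x ∈ (univ : Set Z), ∀ O : Set Z, IsOpen O → x ∈ O →
      ∃ G, Good G ∧ x ∈ G ∧ G ⊆ O := by
    intro x _ O hO hxO
    refine ⟨O ∩ (chartAt (EuclideanSpace ℝ (Fin n)) x).source,
      ⟨hO.inter (chartAt _ x).open_source, x, inter_subset_right⟩,
      ⟨hxO, mem_chart_source _ x⟩, inter_subset_left⟩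
  set CE := CompactExhaustion.choice Z with hCE
  exact mv_abstract (fun G hG => hG.1) (fun G _ => subset_univ G) hGinter hGQ hbasis
    (fun U V hUo hVo _ _ => hUnion U V hUo hVo)
    (fun U hUo _ hdisj hQ => hDisjoint ℕ U hUo hdisj hQ)
    hPempty (fun m => CE m) CE.isCompact CE.subset_interior_succ CE.iUnion_eq
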